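/- In the normal mean example, the predictive random set S_ω(U) = [U - ωU, U + ω(1-U)] with U ~ Uniform(0,1) is credible at every level α ∈ (0,1) whenever ω ∈ [1/2, 1]: that is, with Q_ω(u) = P{U : u ∉ S_ω(U)}, one has P{U* ~ Unif(0,1) : Q_ω(U*) ≥ 1 - α} ≤ α. -/

import Mathlib

open MeasureTheory

lemma key_bound (ω α : ℝ) (hω1 : 1/2 ≤ ω) (hω2 : ω ≤ 1) (hα0 : 0 < α) (hα1 : α < 1)
    (u : ℝ) (hu0 : 0 < u) (hu1 : u < 1)
    (h1 : α * (1-ω) < u) (h2 : u < 1 - α*(1-ω)) :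
    ((volume.restrict (Set.Ioo (0:ℝ) 1))
      {v | u ∉ Set.Icc (v - ω*v) (v + ω*(1-v))}).toReal < 1 - α := by
  rw [Measure.restrict_apply' measurableSet_Ioo]
  set B := {v : ℝ | u ∉ Set.Icc (v - ω*v) (v + ω*(1-v))} ∩ Set.Ioo (0:ℝ) 1 with hB
  have ht0 : 0 ≤ 1 - ω := by linarith
  rcases eq_or_lt_of_le ht0 with h0 | htpos
  · -- ω = 1
    have hBe : B = ∅ := Set.eq_empty_iff_forall_notMem.mpr fun v hv =>
      hv.1 (Set.mem_Icc.mpr ⟨by nlinarith [hv.2.1, hv.2.2], by nlinarith [hv.2.1, hv.2.2]⟩)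
    rw [hBe]
    simp
    linarith
  · rcases lt_or_ge u (1 - ω) with hu | hu
    · -- u < t : B ⊆ Ioo (u/(1-ω)) 1
      have hsub : B ⊆ Set.Ioo (u/(1-ω)) 1 := by
        intro v hv
        obtain ⟨hvB, hv0, hv1⟩ := hv
        refine ⟨?_, hv1⟩
        by_contra hle
        push_neg at hle
        have hvt : v * (1-ω) ≤ u := (le_div_iff₀ htpos).mp hle
        exact hvB (Set.mem_Icc.mpr ⟨by nlinarith, by nlinarith⟩)
      have hle : (volume B).toReal ≤ 1 - u/(1-ω) := by
        refine ENNReal.toReal_le_of_le_ofReal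
          (by rw [sub_nonneg]; exact (div_le_one htpos).mpr hu.le) ?_
        calc volume B ≤ volume (Set.Ioo (u/(1-ω)) 1) := measure_mono hsub
          _ = ENNReal.ofReal (1 - u/(1-ω)) := Real.volume_Ioo
      have : 1 - u/(1-ω) < 1 - α := by
        have : α < u / (1-ω) := by rw [lt_div_iff₀ htpos]; nlinarith
        linarith
      linarith
    · -- u ≥ t : B ⊆ Ioo 0 ((u-ω)/(1-ω))
      have hsub : B ⊆ Set.Ioo 0 ((u-ω)/(1-ω)) := by
        intro v hv
        obtain ⟨hvB, hv0, hv1⟩ := hv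
        refine ⟨hv0, ?_⟩
        have hlow : v - ω*v ≤ u := by nlinarith
        have hhigh : ¬ (u ≤ v + ω*(1-v)) := fun h => hvB (Set.mem_Icc.mpr ⟨hlow, h⟩)
        push_neg at hhigh
        rw [lt_div_iff₀ htpos]; nlinarith
      set c := max ((u-ω)/(1-ω)) 0 with hc
      have hle : (volume B).toReal ≤ c := by
        refine ENNReal.toReal_le_of_le_ofReal (le_max_right _ _) ?_
        calc volume B ≤ volume (Set.Ioo 0 ((u-ω)/(1-ω))) := measure_mono hsub
          _ = ENNReal.ofReal ((u-ω)/(1-ω) - 0) := Real.volume_Ioo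
          _ ≤ ENNReal.ofReal c := by
              apply ENNReal.ofReal_le_ofReal; simp [hc]
      have hclt : c < 1 - α := by
        apply max_lt ?_ (by linarith)
        rw [div_lt_iff₀ htpos]; nlinarith
      linarith

/-- in the normal mean example, the predictive random set
`S_ω(U) = [U - ωU, U + ω(1-U)]` with `U ~ Unif(0,1)` is credible at every level
`α ∈ (0,1)` whenever `ω ∈ [1/2, 1]`. -/
theorem normal_mean_PRS_credible
    (ω : ℝ) (hω : ω ∈ Set.Icc (1/2 : ℝ) 1)
    (α : ℝ) (hα : α ∈ Set.Ioo (0:ℝ) 1)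
    (μ : Measure ℝ) (hμ : μ = volume.restrict (Set.Ioo (0:ℝ) 1))
    (Q : ℝ → ℝ)
    (hQ : ∀ u, Q u = (μ {v | u ∉ Set.Icc (v - ω * v) (v + ω * (1 - v))}).toReal) :
    (μ {ustar | 1 - α ≤ Q ustar}).toReal ≤ α := by
  obtain ⟨hω1, hω2⟩ := hω
  obtain ⟨hα0, hα1⟩ := hα
  set t := 1 - ω with ht
  have ht0 : 0 ≤ t := by simp [ht]; linarith
  have ht12 : t ≤ 1/2 := by simp [ht]; linarith
  subst hμ
  rw [Measure.restrict_apply' measurableSet_Ioo]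
  have hsub : {ustar | 1 - α ≤ Q ustar} ∩ Set.Ioo (0:ℝ) 1
      ⊆ Set.Ioc 0 (α*t) ∪ Set.Ico (1 - α*t) 1 := by
    intro u hu
    obtain ⟨huQ, hu0, hu1⟩ := hu
    by_cases hcase : u ≤ α * t
    · exact Or.inl ⟨hu0, hcase⟩
    · by_cases hcase2 : 1 - α*t ≤ u
      · exact Or.inr ⟨hcase2, hu1⟩
      · exfalso
        push_neg at hcase hcase2
        have := key_bound ω α hω1 hω2 hα0 hα1 u hu0 hu1 (by rw [ht] at hcase; exact hcase)
          (by rw [ht] at hcase2; exact hcase2)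
        simp only [Set.mem_setOf_eq, hQ u] at huQ
        linarith
  refine ENNReal.toReal_le_of_le_ofReal (le_of_lt hα0) ?_
  calc volume ({ustar | 1 - α ≤ Q ustar} ∩ Set.Ioo (0:ℝ) 1)
      ≤ volume (Set.Ioc 0 (α*t) ∪ Set.Ico (1 - α*t) 1) := measure_mono hsub
    _ ≤ volume (Set.Ioc (0:ℝ) (α*t)) + volume (Set.Ico (1 - α*t) 1) := measure_union_le _ _
    _ = ENNReal.ofReal (α*t - 0) + ENNReal.ofReal (1 - (1 - α*t)) := by
        rw [Real.volume_Ioc, Real.volume_Ico]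
    _ ≤ ENNReal.ofReal α := by
        rw [← ENNReal.ofReal_add (by nlinarith) (by nlinarith)]
        apply ENNReal.ofReal_le_ofReal
        nlinarith
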